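/- arXiv:1608.07918 — 2 statements merged into one kernel-verified Lean document; each statement's English description precedes it below -/
import Mathlib

section
/- Let 0 → L →(f₁,g₁) M₁ ⊕ M₂ →(g₂,f₂) N → 0 be a short exact sequence of finite-dimensional modules in which none of the component maps f₁ : L → M₁, g₁ : L → M₂, g₂ : M₁ → N, f₂ : M₂ → N is an isomorphism, and each of them is either injective or surjective. If f₁ is injective, then f₂ is injective. -/
/-- Let `0 → L →(f₁,g₁) M₁ ⊕ M₂ →(g₂,f₂) N → 0` be a short exact sequence of
finite-dimensional modules in which none of the component maps `f₁, g₁, g₂, f₂` is an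
isomorphism, and each of them is either injective or surjective.
If `f₁` is injective, then `f₂` is injective. -/
theorem stmt_1 (K : Type) [Field K] (Λ : Type) [Ring Λ] [Algebra K Λ]
    [FiniteDimensional K Λ]
    (L M₁ M₂ N : Type)
    [AddCommGroup L] [Module Λ L] [Module K L] [IsScalarTower K Λ L]
    [FiniteDimensional K L]
    [AddCommGroup M₁] [Module Λ M₁] [Module K M₁] [IsScalarTower K Λ M₁]
    [FiniteDimensional K M₁]
    [AddCommGroup M₂] [Module Λ M₂] [Module K M₂] [IsScalarTower K Λ M₂]
    [FiniteDimensional K M₂]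
    [AddCommGroup N] [Module Λ N] [Module K N] [IsScalarTower K Λ N]
    [FiniteDimensional K N]
    (f₁ : L →ₗ[Λ] M₁) (g₁ : L →ₗ[Λ] M₂) (g₂ : M₁ →ₗ[Λ] N) (f₂ : M₂ →ₗ[Λ] N)
    (hinj : Function.Injective (f₁.prod g₁))
    (hsurj : Function.Surjective (g₂.coprod f₂))
    (hex : LinearMap.range (f₁.prod g₁) = LinearMap.ker (g₂.coprod f₂))
    (hni₁ : ¬ Function.Bijective f₁) (hni₂ : ¬ Function.Bijective g₁)
    (hni₃ : ¬ Function.Bijective g₂) (hni₄ : ¬ Function.Bijective f₂)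
    (hme₁ : Function.Injective f₁ ∨ Function.Surjective f₁)
    (hme₂ : Function.Injective g₁ ∨ Function.Surjective g₁)
    (hme₃ : Function.Injective g₂ ∨ Function.Surjective g₂)
    (hme₄ : Function.Injective f₂ ∨ Function.Surjective f₂) :
    Function.Injective f₁ → Function.Injective f₂ := by
  intro hf₁
  by_contra hf₂
  have hf₂s : Function.Surjective f₂ := hme₄.resolve_left hf₂
  set P := (f₁.prod g₁).restrictScalars K with hP
  set Q := (g₂.coprod f₂).restrictScalars K with hQ
  have hPinj : Function.Injective P := hinj
  have hQsurj : Function.Surjective Q := hsurj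
  have hexK : LinearMap.range P = LinearMap.ker Q := by
    ext x
    constructor
    · rintro ⟨y, rfl⟩
      have : (f₁.prod g₁) y ∈ LinearMap.ker (g₂.coprod f₂) := by
        rw [← hex]; exact ⟨y, rfl⟩
      simpa [hP, hQ] using this
    · intro hx
      have : x ∈ LinearMap.range (f₁.prod g₁) := by
        rw [hex]; simpa [hQ] using hx
      obtain ⟨y, hy⟩ := this
      exact ⟨y, hy⟩
  have hrn := LinearMap.finrank_range_add_finrank_ker Q
  have hrtop : LinearMap.range Q = ⊤ := LinearMap.range_eq_top.mpr hQsurj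
  have hker : Module.finrank K (LinearMap.ker Q) = Module.finrank K L := by
    rw [← hexK]
    exact (LinearEquiv.finrank_eq (LinearEquiv.ofInjective P hPinj)).symm
  rw [hrtop, finrank_top, hker, Module.finrank_prod] at hrn
  -- f₁ injective not surjective: finrank L < finrank M₁
  have hf₁ns : ¬ Function.Surjective f₁ := fun h => hni₁ ⟨hf₁, h⟩
  have h1 : Module.finrank K L < Module.finrank K M₁ := by
    have heq : Module.finrank K L =
        Module.finrank K (LinearMap.range (f₁.restrictScalars K)) :=
      LinearEquiv.finrank_eq (LinearEquiv.ofInjective (f₁.restrictScalars K) hf₁)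
    have hne : LinearMap.range (f₁.restrictScalars K) ≠ ⊤ := by
      intro h
      apply hf₁ns
      intro y
      have hy : y ∈ LinearMap.range (f₁.restrictScalars K) := h ▸ Submodule.mem_top
      exact hy
    rw [heq]
    exact Submodule.finrank_lt hne
  -- f₂ surjective not injective: finrank N < finrank M₂
  have h2 : Module.finrank K N < Module.finrank K M₂ := by
    have hrn2 := LinearMap.finrank_range_add_finrank_ker (f₂.restrictScalars K)
    have hr2 : LinearMap.range (f₂.restrictScalars K) = ⊤ :=
      LinearMap.range_eq_top.mpr hf₂s
    rw [hr2, finrank_top] at hrn2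
    have hkpos : 0 < Module.finrank K (LinearMap.ker (f₂.restrictScalars K)) := by
      rw [Module.finrank_pos_iff, Submodule.nontrivial_iff_ne_bot]
      intro h
      exact hf₂ ((LinearMap.ker_eq_bot (f := f₂.restrictScalars K)).mp h)
    omega
  omega
end

section
/- For the linearly oriented quiver 1 → 2 → ⋯ → n of type Aₙ, every indecomposable representation over a field K is isomorphic to an interval representation [a,b] for some 1 ≤ a ≤ b ≤ n, where [a,b] places K at each vertex i with a ≤ i ≤ b, zero elsewhere, with identity maps between adjacent copies of K. -/
open Submodule

/-- A representation of the linearly oriented `Aₙ` quiver `1 → 2 → ⋯ → n` over `K`.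
Vertex `v` (for `1 ≤ v ≤ n`) is indexed by `⟨v-1, _⟩ : Fin n`. -/
structure LinRep (K : Type) [Field K] (n : ℕ) where
  V : Fin n → Type
  [acg : ∀ i, AddCommGroup (V i)]
  [mod : ∀ i, Module K (V i)]
  f : ∀ (i : ℕ) (h : i + 1 < n), V ⟨i, Nat.lt_of_succ_lt h⟩ →ₗ[K] V ⟨i + 1, h⟩

attribute [instance] LinRep.acg LinRep.mod

variable {K : Type} [Field K] {n : ℕ}

/-- Morphisms of representations of the linearly oriented `Aₙ` quiver. -/
structure LinRepHom (M N : LinRep K n) where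
  φ : ∀ i, M.V i →ₗ[K] N.V i
  comm : ∀ (i : ℕ) (h : i + 1 < n),
    (N.f i h).comp (φ ⟨i, Nat.lt_of_succ_lt h⟩) = (φ ⟨i + 1, h⟩).comp (M.f i h)

/-- The identity morphism. -/
def LinRepHom.id (M : LinRep K n) : LinRepHom M M :=
  ⟨fun _ => LinearMap.id, fun _ _ => by ext x; simp⟩

/-- Composition of morphisms of representations. -/
def LinRepHom.comp {M N P : LinRep K n} (g : LinRepHom N P) (f : LinRepHom M N) :
    LinRepHom M P where
  φ i := (g.φ i).comp (f.φ i)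
  comm i h := by
    rw [← LinearMap.comp_assoc, g.comm i h, LinearMap.comp_assoc, f.comm i h,
      ← LinearMap.comp_assoc]

/-- A representation is zero if all its vector spaces are trivial. -/
def LinRep.IsZero (M : LinRep K n) : Prop := ∀ i, ∀ x : M.V i, x = 0

/-- A morphism of representations is zero. -/
def LinRepHom.IsZero {M N : LinRep K n} (f : LinRepHom M N) : Prop :=
  ∀ i, ∀ x : M.V i, f.φ i x = 0

/-- The direct sum of two representations. -/
def LinRep.dsum (M N : LinRep K n) : LinRep K n where
  V i := M.V i × N.V i
  f i h := (M.f i h).prodMap (N.f i h)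

/-- Two representations are isomorphic if there is a morphism which is bijective
at every vertex. -/
def LinRepIso (M N : LinRep K n) : Prop :=
  ∃ g : LinRepHom M N, ∀ i, Function.Bijective (g.φ i)

/-- A representation is indecomposable if it is nonzero and not isomorphic to the
direct sum of two nonzero representations. -/
def LinRep.Indec (M : LinRep K n) : Prop :=
  ¬ M.IsZero ∧ ∀ N P : LinRep K n, LinRepIso M (N.dsum P) → N.IsZero ∨ P.IsZero

/-- The fibre of the interval representation `[a,b]` at vertex `v`, as a submodule
of `K`: all of `K` if `a ≤ v ≤ b` and zero otherwise. -/
def ivSpace (K : Type) [Field K] (a b v : ℕ) : Submodule K K :=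
  if a ≤ v ∧ v ≤ b then ⊤ else ⊥

open Classical in
/-- The canonical map between two `⊤/⊥` submodules of `K`:
the inclusion if possible, and zero otherwise. -/
noncomputable def ivMap (K : Type) [Field K] (S T : Submodule K K) : S →ₗ[K] T :=
  if h : S ≤ T then Submodule.inclusion h else 0

/-- The interval representation `[a,b]`: `K` at each vertex `v` with `a ≤ v ≤ b`,
zero elsewhere, with identity maps between adjacent copies of `K`. -/
noncomputable def interval (K : Type) [Field K] (n a b : ℕ) : LinRep K n where
  V i := ↥(ivSpace K a b ((i : ℕ) + 1))
  f i _ := ivMap K _ _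
section Dev
variable {K : Type} [Field K] {n : ℕ}

open Module

/-- Composite map from vertex `a` to vertex `j` (0-based internal indices);
zero map if `j < a`, identity if `j = a`. -/
noncomputable def cf (M : LinRep K n) (a : ℕ) (ha : a < n) :
    ∀ (j : ℕ) (hj : j < n), M.V ⟨a, ha⟩ →ₗ[K] M.V ⟨j, hj⟩
  | 0, hj => if e : a = 0 then
      cast (by subst e; rfl) (LinearMap.id (R := K) (M := M.V ⟨a, ha⟩)) else 0
  | (j+1), hj => if e : a = j + 1 then
      cast (by subst e; rfl) (LinearMap.id (R := K) (M := M.V ⟨a, ha⟩)) else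
      (M.f j hj).comp (cf M a ha j (Nat.lt_of_succ_lt hj))

lemma cf_self (M : LinRep K n) (a : ℕ) (ha : a < n) (h : a < n) :
    cf M a ha a h = LinearMap.id := by
  cases a with
  | zero => rw [cf, dif_pos rfl]; exact cast_eq _ _
  | succ j => rw [cf, dif_pos rfl]; exact cast_eq _ _

lemma cf_lt (M : LinRep K n) (a : ℕ) (ha : a < n) :
    ∀ (j : ℕ) (hj : j < n), j < a → cf M a ha j hj = 0 := by
  intro j
  induction j with
  | zero => intro hj hja; rw [cf, dif_neg (by omega)]
  | succ j IH =>
    intro hj hja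
    rw [cf, dif_neg (by omega), IH _ (by omega), LinearMap.comp_zero]

lemma cf_succ (M : LinRep K n) (a : ℕ) (ha : a < n) (j : ℕ) (hj : j + 1 < n) (haj : a ≤ j) :
    cf M a ha (j+1) hj = (M.f j hj).comp (cf M a ha j (Nat.lt_of_succ_lt hj)) := by
  rw [cf, dif_neg (by omega)]

lemma cf_comp (M : LinRep K n) (a i : ℕ) (ha : a < n) (hi : i < n) (hai : a ≤ i) :
    ∀ (j : ℕ) (hij : i ≤ j) (hj : j < n),
      (cf M i hi j hj).comp (cf M a ha i hi) = cf M a ha j hj := by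
  intro j
  induction j with
  | zero =>
    intro hij hj
    have : i = 0 := by omega
    subst this
    rw [cf_self, LinearMap.id_comp]
  | succ j IH =>
    intro hij hj
    rcases Nat.lt_or_ge i (j+1) with h' | h'
    · rw [cf_succ M i hi j hj (by omega), cf_succ M a ha j hj (by omega),
        LinearMap.comp_assoc, IH (by omega)]
    · have : i = j + 1 := by omega
      subst this
      rw [cf_self, LinearMap.id_comp]
/-- The subrepresentation of `M` given by a family of submodules closed under the maps. -/
def LinRep.restrict (M : LinRep K n) (U : ∀ i : Fin n, Submodule K (M.V i))
    (hU : ∀ (i : ℕ) (h : i + 1 < n),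
      ∀ v ∈ U ⟨i, Nat.lt_of_succ_lt h⟩, M.f i h v ∈ U ⟨i+1, h⟩) : LinRep K n where
  V i := ↥(U i)
  f i h := (M.f i h).restrict (hU i h)

lemma LinRepIso.trans {M N P : LinRep K n} (h1 : LinRepIso M N) (h2 : LinRepIso N P) :
    LinRepIso M P := by
  obtain ⟨g, hg⟩ := h1
  obtain ⟨g', hg'⟩ := h2
  exact ⟨g'.comp g, fun i => (hg' i).comp (hg i)⟩

/-- `M` is isomorphic to the direct sum of two pointwise complementary subrepresentations. -/
lemma iso_dsum_compl (M : LinRep K n) (S W : ∀ i : Fin n, Submodule K (M.V i))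
    (hS : ∀ (i : ℕ) (h : i + 1 < n),
      ∀ v ∈ S ⟨i, Nat.lt_of_succ_lt h⟩, M.f i h v ∈ S ⟨i+1, h⟩)
    (hW : ∀ (i : ℕ) (h : i + 1 < n),
      ∀ v ∈ W ⟨i, Nat.lt_of_succ_lt h⟩, M.f i h v ∈ W ⟨i+1, h⟩)
    (hc : ∀ i, IsCompl (S i) (W i)) :
    LinRepIso M ((M.restrict S hS).dsum (M.restrict W hW)) := by
  refine ⟨⟨fun i => ((Submodule.prodEquivOfIsCompl (S i) (W i) (hc i)).symm).toLinearMap, ?_⟩,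
    fun i => (Submodule.prodEquivOfIsCompl (S i) (W i) (hc i)).symm.bijective⟩
  intro i h
  ext v
  apply (Submodule.prodEquivOfIsCompl _ _ (hc ⟨i+1, h⟩)).injective
  show (Submodule.prodEquivOfIsCompl _ _ (hc ⟨i+1, h⟩))
      (((M.restrict S hS).f i h).prodMap ((M.restrict W hW).f i h)
        ((Submodule.prodEquivOfIsCompl (S ⟨i, Nat.lt_of_succ_lt h⟩) _ (hc _)).symm v))
    = (Submodule.prodEquivOfIsCompl _ _ (hc ⟨i+1, h⟩))
      ((Submodule.prodEquivOfIsCompl _ _ (hc ⟨i+1, h⟩)).symm (M.f i h v))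
  rw [LinearEquiv.apply_symm_apply]
  set p := (Submodule.prodEquivOfIsCompl (S ⟨i, Nat.lt_of_succ_lt h⟩) _ (hc _)).symm v with hp
  have hv : (p.1 : M.V ⟨i, Nat.lt_of_succ_lt h⟩) + (p.2 : M.V ⟨i, Nat.lt_of_succ_lt h⟩) = v := by
    rw [← Submodule.coe_prodEquivOfIsCompl' _ _ (hc _), hp, LinearEquiv.apply_symm_apply]
  erw [LinearMap.prodMap_apply, Submodule.coe_prodEquivOfIsCompl']
  show (M.f i h) p.1 + (M.f i h) p.2 = M.f i h v
  rw [← map_add, hv]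
/-- Transport an isomorphism through the left factor of a direct sum. -/
lemma dsum_congr_left {A A' P : LinRep K n} (h : LinRepIso A A') :
    LinRepIso (A.dsum P) (A'.dsum P) := by
  obtain ⟨g, hg⟩ := h
  refine ⟨⟨fun i => (g.φ i).prodMap LinearMap.id, ?_⟩,
    fun i => (hg i).prodMap Function.bijective_id⟩
  intro i h
  ext v
  show ((A'.f i h) ((g.φ _) v.1), (P.f i h) v.2) = ((g.φ _) ((A.f i h) v.1), (P.f i h) v.2)
  exact Prod.ext (LinearMap.congr_fun (g.comm i h) v.1) rfl

/-- Dropping a zero summand. -/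
lemma iso_of_dsum_zero (I P : LinRep K n) (hP : P.IsZero) :
    LinRepIso (I.dsum P) I := by
  refine ⟨⟨fun i => LinearMap.fst K _ _, fun i h => rfl⟩, fun i => ⟨?_, fun y => ⟨(y, 0), rfl⟩⟩⟩
  intro v w hvw
  have : v.2 = w.2 := by rw [hP i v.2, hP i w.2]
  exact Prod.ext hvw this

lemma ivSpace_top {a b v : ℕ} (h1 : a ≤ v) (h2 : v ≤ b) : ivSpace K a b v = ⊤ :=
  if_pos ⟨h1, h2⟩

lemma ivSpace_bot {a b v : ℕ} (h : ¬ (a ≤ v ∧ v ≤ b)) : ivSpace K a b v = ⊥ :=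
  if_neg h

lemma interval_ne_zero (A B : ℕ) (h1 : 1 ≤ A) (h2 : A ≤ B) (h3 : B ≤ n) :
    ¬ (interval K n A B).IsZero := by
  intro hz
  have hAn : A - 1 < n := by omega
  have hmem : (1 : K) ∈ ivSpace K A B ((⟨A-1, hAn⟩ : Fin n).val + 1) := by
    rw [ivSpace_top (by simp; omega) (by simp; omega)]
    trivial
  have := hz ⟨A-1, hAn⟩ ⟨1, hmem⟩
  have this := Subtype.ext_iff.mp this
  exact one_ne_zero (α := K) this
lemma ivMap_val {S T : Submodule K K} (h : S ≤ T) (z : S) :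
    ((ivMap K S T) z : K) = (z : K) := by
  rw [ivMap, dif_pos h]; rfl

lemma ivMap_of_not_le {S T : Submodule K K} (h : ¬ S ≤ T) :
    ivMap K S T = 0 := by
  rw [ivMap, dif_neg h]

lemma top_not_le_bot : ¬ ((⊤ : Submodule K K) ≤ ⊥) := by
  intro h
  exact one_ne_zero (α := K) (Submodule.mem_bot K |>.mp (h Submodule.mem_top))

/-- The comparison map from the interval representation into the orbit subrepresentation. -/
noncomputable def psiAux (M : LinRep K n) (a b : ℕ) (ha : a < n) (x : M.V ⟨a, ha⟩)
    (i : Fin n) : ↥(ivSpace K (a+1) (b+1) (i.1+1)) →ₗ[K]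
      ↥(Submodule.map (cf M a ha i.1 i.2) (Submodule.span K {x})) :=
  LinearMap.codRestrict _
    (((cf M a ha i.1 i.2).comp (LinearMap.toSpanSingleton K _ x)).comp (Submodule.subtype _))
    (fun c => ⟨(c : K) • x, Submodule.smul_mem _ _ (Submodule.mem_span_singleton_self x),
      rfl⟩)

lemma psiAux_val (M : LinRep K n) (a b : ℕ) (ha : a < n) (x : M.V ⟨a, ha⟩)
    (i : Fin n) (c : ↥(ivSpace K (a+1) (b+1) (i.1+1))) :
    ((psiAux M a b ha x i c) : M.V i) = (c : K) • cf M a ha i.1 i.2 x :=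
  map_smul (cf M a ha i.1 i.2) (c : K) x

lemma psiAux_val' (M : LinRep K n) (a b : ℕ) (ha : a < n) (x : M.V ⟨a, ha⟩)
    (i : ℕ) (hi : i < n) (c : ↥(ivSpace K (a+1) (b+1) (i+1))) :
    ((psiAux M a b ha x ⟨i, hi⟩ c) : M.V ⟨i, hi⟩) = (c : K) • cf M a ha i hi x :=
  map_smul (cf M a ha i hi) (c : K) x

lemma restrict_S_iso_interval (M : LinRep K n) (a b : ℕ) (ha : a < n) (hb : b < n)
    (hab : a ≤ b) (x : M.V ⟨a, ha⟩) (hxb : cf M a ha b hb x ≠ 0)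
    (hvan : ∀ (j : ℕ) (hj : j < n), b < j → cf M a ha j hj x = 0)
    (hS : ∀ (i : ℕ) (h : i + 1 < n),
      ∀ v ∈ (fun i : Fin n => Submodule.map (cf M a ha i.1 i.2) (Submodule.span K {x}))
        ⟨i, Nat.lt_of_succ_lt h⟩,
        M.f i h v ∈ (fun i : Fin n => Submodule.map (cf M a ha i.1 i.2) (Submodule.span K {x}))
        ⟨i+1, h⟩) :
    LinRepIso (M.restrict (fun i : Fin n => Submodule.map (cf M a ha i.1 i.2)
      (Submodule.span K {x})) hS) (interval K n (a+1) (b+1)) := by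
  have hXin : ∀ (j : ℕ) (hj : j < n), a ≤ j → j ≤ b → cf M a ha j hj x ≠ 0 := by
    intro j hj hja hjb h0
    apply hxb
    have hcomp := cf_comp M a j ha hj hja b hjb hb
    rw [← hcomp, LinearMap.comp_apply, h0, map_zero]
  have hXout : ∀ (j : ℕ) (hj : j < n), ¬ (a ≤ j ∧ j ≤ b) → cf M a ha j hj x = 0 := by
    intro j hj hcond
    rcases Nat.lt_or_ge j a with h' | h'
    · rw [cf_lt M a ha j hj h']; rfl
    · exact hvan j hj (by omega)
  have hbij : ∀ i : Fin n, Function.Bijective (psiAux M a b ha x i) := by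
    intro i
    by_cases hi : a ≤ i.1 ∧ i.1 ≤ b
    · constructor
      · intro c c' hcc
        apply Subtype.ext
        have h1 : (c : K) • cf M a ha i.1 i.2 x = (c' : K) • cf M a ha i.1 i.2 x := by
          rw [← psiAux_val M a b ha x i c, ← psiAux_val M a b ha x i c', hcc]
        have h2 : ((c : K) - (c' : K)) • cf M a ha i.1 i.2 x = 0 := by
          rw [sub_smul, h1, sub_self]
        rcases smul_eq_zero.mp h2 with h3 | h3
        · exact sub_eq_zero.mp h3
        · exact absurd h3 (hXin i.1 i.2 hi.1 hi.2)
      · intro y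
        obtain ⟨z, hz, hzy⟩ := y.2
        obtain ⟨c, rfl⟩ := Submodule.mem_span_singleton.mp hz
        refine ⟨⟨c, ?_⟩, ?_⟩
        · rw [ivSpace_top (by omega) (by omega)]; trivial
        · apply Subtype.ext
          rw [psiAux_val]
          show c • cf M a ha i.1 i.2 x = (y : M.V i)
          rw [← hzy, map_smul]
    · constructor
      · intro c c' _
        have hbot : ivSpace K (a+1) (b+1) (i.1+1) = ⊥ := ivSpace_bot (by omega)
        apply Subtype.ext
        have hc : (c : K) = 0 := Submodule.mem_bot K |>.mp (hbot.le c.2)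
        have hc' : (c' : K) = 0 := Submodule.mem_bot K |>.mp (hbot.le c'.2)
        rw [hc, hc']
      · intro y
        refine ⟨0, ?_⟩
        apply Subtype.ext
        rw [psiAux_val]
        obtain ⟨z, hz, hzy⟩ := y.2
        obtain ⟨c, rfl⟩ := Submodule.mem_span_singleton.mp hz
        show ((0 : ↥(ivSpace K (a+1) (b+1) (i.1+1))) : K) • cf M a ha i.1 i.2 x = (y : M.V i)
        rw [← hzy, map_smul, hXout i.1 i.2 hi, smul_zero, smul_zero]
  -- pointwise commutation of ψ with the structure maps
  have ψcomm : ∀ (i : ℕ) (h : i + 1 < n)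
      (c : ↥(ivSpace K (a+1) (b+1) (i+1))),
      (M.f i h) ((psiAux M a b ha x ⟨i, Nat.lt_of_succ_lt h⟩ c : M.V ⟨i, Nat.lt_of_succ_lt h⟩))
        = ((psiAux M a b ha x ⟨i+1, h⟩ (((interval K n (a+1) (b+1)).f i h) c))
            : M.V ⟨i+1, h⟩) := by
    intro i h c
    rw [psiAux_val' M a b ha x i (Nat.lt_of_succ_lt h) c, map_smul,
      psiAux_val' M a b ha x (i+1) h (((interval K n (a+1) (b+1)).f i h) c)]
    by_cases hcnd : a ≤ i ∧ i ≤ b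
    · have hup : (M.f i h) (cf M a ha i (Nat.lt_of_succ_lt h) x) = cf M a ha (i+1) h x :=
        (LinearMap.congr_fun (cf_succ M a ha i h hcnd.1) x).symm
      rw [hup]
      rcases Nat.lt_or_ge i b with hib | hib
      · have hle : ivSpace K (a+1) (b+1) (i+1) ≤ ivSpace K (a+1) (b+1) (i+1+1) := by
          rw [ivSpace_top (by omega) (by omega), ivSpace_top (by omega) (by omega)]
        exact congrArg (fun t : K => t • cf M a ha (i+1) h x) (ivMap_val hle c).symm
      · have hX0 : cf M a ha (i+1) h x = 0 := hvan (i+1) h (by omega)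
        rw [hX0, smul_zero, smul_zero]
    · have hbot : ivSpace K (a+1) (b+1) (i+1) = ⊥ := ivSpace_bot (by omega)
      have hc0 : c = 0 := Subtype.ext (Submodule.mem_bot K |>.mp (hbot.le c.2))
      rw [hc0]
      erw [map_zero]
      rw [ZeroMemClass.coe_zero]
      erw [ZeroMemClass.coe_zero]
      rw [zero_smul, zero_smul]
  -- assemble the isomorphism
  refine ⟨⟨fun i => (LinearEquiv.ofBijective (psiAux M a b ha x i) (hbij i)).symm.toLinearMap,
    ?_⟩, fun i => (LinearEquiv.ofBijective (psiAux M a b ha x i) (hbij i)).symm.bijective⟩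
  intro i h
  ext y
  obtain ⟨c, rfl⟩ := (LinearEquiv.ofBijective (psiAux M a b ha x ⟨i, Nat.lt_of_succ_lt h⟩)
    (hbij ⟨i, Nat.lt_of_succ_lt h⟩)).surjective y
  apply (LinearEquiv.ofBijective (psiAux M a b ha x ⟨i+1, h⟩) (hbij ⟨i+1, h⟩)).injective
  show (LinearEquiv.ofBijective (psiAux M a b ha x ⟨i+1, h⟩) (hbij ⟨i+1, h⟩))
      (((interval K n (a+1) (b+1)).f i h)
        ((LinearEquiv.ofBijective (psiAux M a b ha x ⟨i, Nat.lt_of_succ_lt h⟩)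
            (hbij ⟨i, Nat.lt_of_succ_lt h⟩)).symm
          ((LinearEquiv.ofBijective (psiAux M a b ha x ⟨i, Nat.lt_of_succ_lt h⟩)
            (hbij ⟨i, Nat.lt_of_succ_lt h⟩)) c)))
    = (LinearEquiv.ofBijective (psiAux M a b ha x ⟨i+1, h⟩) (hbij ⟨i+1, h⟩))
      ((LinearEquiv.ofBijective (psiAux M a b ha x ⟨i+1, h⟩) (hbij ⟨i+1, h⟩)).symm
        (((M.restrict (fun i : Fin n => Submodule.map (cf M a ha i.1 i.2)
            (Submodule.span K {x})) hS).f i h)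
          ((LinearEquiv.ofBijective (psiAux M a b ha x ⟨i, Nat.lt_of_succ_lt h⟩)
            (hbij ⟨i, Nat.lt_of_succ_lt h⟩)) c)))
  rw [LinearEquiv.symm_apply_apply]
  erw [LinearEquiv.apply_symm_apply]
  apply Subtype.ext
  show (psiAux M a b ha x ⟨i+1, h⟩ (((interval K n (a+1) (b+1)).f i h) c) : M.V ⟨i+1, h⟩)
    = (M.f i h) ((psiAux M a b ha x ⟨i, Nat.lt_of_succ_lt h⟩ c : M.V ⟨i, Nat.lt_of_succ_lt h⟩))
  exact (ψcomm i h c).symm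
lemma peel (M : LinRep K n) (hfd : ∀ i, FiniteDimensional K (M.V i)) (hnz : ¬ M.IsZero) :
    ∃ (A B : ℕ) (P : LinRep K n), (∀ i, FiniteDimensional K (P.V i)) ∧
      1 ≤ A ∧ A ≤ B ∧ B ≤ n ∧
      (∑ i, Module.finrank K (P.V i)) < (∑ i, Module.finrank K (M.V i)) ∧
      LinRepIso M ((interval K n A B).dsum P) := by
  classical
  -- the first nonzero vertex
  have hex : ∃ j : ℕ, ∃ h : j < n, ∃ v : M.V ⟨j, h⟩, v ≠ 0 := by
    rw [LinRep.IsZero] at hnz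
    push_neg at hnz
    obtain ⟨i, v, hv⟩ := hnz
    exact ⟨i.1, i.2, v, hv⟩
  set a := Nat.find hex with ha_def
  obtain ⟨ha, x, hx⟩ := Nat.find_spec hex
  have hmin : ∀ j, j < a → ∀ (h : j < n) (v : M.V ⟨j, h⟩), v = 0 := by
    intro j hj h v
    by_contra hv
    exact Nat.find_min hex hj ⟨h, v, hv⟩
  -- the end of the orbit of x
  have hex2 : ∃ j : ℕ, a < j ∧ ∀ h : j < n, cf M a ha j h x = 0 :=
    ⟨n, by omega, fun h => absurd h (lt_irrefl n)⟩
  set c := Nat.find hex2 with hc_def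
  have hc := Nat.find_spec hex2
  have hab : a ≤ c - 1 := by omega
  have hbex : ∃ hb : c - 1 < n, cf M a ha (c-1) hb x ≠ 0 := by
    by_cases heq : c - 1 = a
    · rw [heq]
      refine ⟨ha, ?_⟩
      rw [cf_self M a ha ha]
      simpa using hx
    · have h1 := Nat.find_min hex2 (show c - 1 < c by omega)
      push_neg at h1
      exact h1 (by omega)
  obtain ⟨hb, hxb⟩ := hbex
  have hvan : ∀ (j : ℕ) (hj : j < n), c - 1 < j → cf M a ha j hj x = 0 := by
    intro j hj hcj
    have hcj' : c ≤ j := by omega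
    have hcn : c < n := lt_of_le_of_lt hcj' hj
    have h0 : cf M a ha c hcn x = 0 := hc.2 hcn
    have hcomp := cf_comp M a c ha hcn (by omega) j hcj' hj
    rw [← hcomp, LinearMap.comp_apply, h0, map_zero]
  -- the orbit subrepresentation S
  have hS : ∀ (i : ℕ) (h : i + 1 < n),
      ∀ v ∈ (fun i : Fin n => Submodule.map (cf M a ha i.1 i.2) (Submodule.span K {x}))
        ⟨i, Nat.lt_of_succ_lt h⟩,
        M.f i h v ∈ (fun i : Fin n => Submodule.map (cf M a ha i.1 i.2) (Submodule.span K {x}))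
        ⟨i+1, h⟩ := by
    intro i h v hv
    by_cases hia : a ≤ i
    · obtain ⟨z, hz, hzv⟩ := hv
      refine ⟨z, hz, ?_⟩
      rw [← hzv, ← LinearMap.comp_apply, ← cf_succ M a ha i h hia]
    · rw [hmin i (by omega) _ v, map_zero]
      exact Submodule.zero_mem _
  -- complement at vertex c-1 and the complementary subrepresentation W
  obtain ⟨Wb, hWb⟩ := Submodule.exists_isCompl (Submodule.span K {cf M a ha (c-1) hb x})
  have hxbW : cf M a ha (c-1) hb x ∉ Wb := by
    intro hmem
    have hh : cf M a ha (c-1) hb x ∈ (Submodule.span K {cf M a ha (c-1) hb x}) ⊓ Wb :=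
      ⟨Submodule.mem_span_singleton_self _, hmem⟩
    rw [hWb.disjoint.eq_bot] at hh
    exact hxb (Submodule.mem_bot K |>.mp hh)
  have hW : ∀ (i : ℕ) (h : i + 1 < n),
      ∀ v ∈ (fun i : Fin n => Submodule.comap (cf M i.1 i.2 (c-1) hb) Wb)
        ⟨i, Nat.lt_of_succ_lt h⟩,
        M.f i h v ∈ (fun i : Fin n => Submodule.comap (cf M i.1 i.2 (c-1) hb) Wb)
        ⟨i+1, h⟩ := by
    intro i h v hv
    by_cases hib : i + 1 ≤ c - 1
    · show cf M (i+1) h (c-1) hb ((M.f i h) v) ∈ Wb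
      have hcomp := cf_comp M i (i+1) (Nat.lt_of_succ_lt h) h (by omega) (c-1) hib hb
      have e2 : cf M i (Nat.lt_of_succ_lt h) (i+1) h v = M.f i h v := by
        rw [cf_succ M i (Nat.lt_of_succ_lt h) i h (le_refl i), LinearMap.comp_apply,
          cf_self M i (Nat.lt_of_succ_lt h) (Nat.lt_of_succ_lt h)]
        rfl
      rw [← e2, ← LinearMap.comp_apply, hcomp]
      exact hv
    · show cf M (i+1) h (c-1) hb ((M.f i h) v) ∈ Wb
      rw [cf_lt M (i+1) h (c-1) hb (by omega)]
      exact Wb.zero_mem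
  -- the two subrepresentations are pointwise complementary
  have hcompl : ∀ i : Fin n,
      IsCompl (Submodule.map (cf M a ha i.1 i.2) (Submodule.span K {x}))
        (Submodule.comap (cf M i.1 i.2 (c-1) hb) Wb) := by
    intro i
    by_cases hia : a ≤ i.1
    · by_cases hib : i.1 ≤ c - 1
      · have hxi_b : ∀ v : M.V i, True := fun _ => trivial
        have hchain : cf M i.1 i.2 (c-1) hb (cf M a ha i.1 i.2 x) = cf M a ha (c-1) hb x := by
          rw [← LinearMap.comp_apply, cf_comp M a i.1 ha i.2 hia (c-1) hib hb]
        constructor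
        · rw [Submodule.disjoint_def]
          intro v hvS hvW
          obtain ⟨z, hz, hzv⟩ := hvS
          obtain ⟨k, rfl⟩ := Submodule.mem_span_singleton.mp hz
          have hWv : cf M i.1 i.2 (c-1) hb v ∈ Wb := hvW
          rw [← hzv, map_smul, map_smul, hchain] at hWv
          have hsp : k • cf M a ha (c-1) hb x ∈ Submodule.span K {cf M a ha (c-1) hb x} :=
            Submodule.smul_mem _ _ (Submodule.mem_span_singleton_self _)
          have hh : k • cf M a ha (c-1) hb x ∈ (Submodule.span K {cf M a ha (c-1) hb x}) ⊓ Wb :=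
            ⟨hsp, hWv⟩
          rw [hWb.disjoint.eq_bot] at hh
          have hk0 := Submodule.mem_bot K |>.mp hh
          rcases smul_eq_zero.mp hk0 with hk | hxb0
          · rw [← hzv, map_smul, hk, zero_smul]
          · exact absurd hxb0 hxb
        · rw [codisjoint_iff, Submodule.eq_top_iff']
          intro v
          have hdec : cf M i.1 i.2 (c-1) hb v
              ∈ (Submodule.span K {cf M a ha (c-1) hb x}) ⊔ Wb := by
            rw [hWb.sup_eq_top]
            trivial
          obtain ⟨s, hs, w, hw, hsw⟩ := Submodule.mem_sup.mp hdec
          obtain ⟨k, rfl⟩ := Submodule.mem_span_singleton.mp hs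
          apply Submodule.mem_sup.mpr
          refine ⟨k • cf M a ha i.1 i.2 x,
            ⟨k • x, Submodule.smul_mem _ _ (Submodule.mem_span_singleton_self x), map_smul _ _ _⟩,
            v - k • cf M a ha i.1 i.2 x, ?_, by abel⟩
          show cf M i.1 i.2 (c-1) hb (v - k • cf M a ha i.1 i.2 x) ∈ Wb
          rw [map_sub, map_smul, hchain]
          have hh : cf M i.1 i.2 (c-1) hb v - k • cf M a ha (c-1) hb x = w := by
            rw [← hsw]; abel
          rw [hh]
          exact hw
      · have hSbot : Submodule.map (cf M a ha i.1 i.2) (Submodule.span K {x}) = ⊥ := by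
          rw [Submodule.map_span, Set.image_singleton, hvan i.1 i.2 (by omega),
            Submodule.span_zero_singleton]
        have hWtop : Submodule.comap (cf M i.1 i.2 (c-1) hb) Wb = ⊤ := by
          rw [Submodule.eq_top_iff']
          intro v
          show cf M i.1 i.2 (c-1) hb v ∈ Wb
          rw [cf_lt M i.1 i.2 (c-1) hb (by omega)]
          exact Wb.zero_mem
        rw [hSbot, hWtop]
        exact isCompl_bot_top
    · have hSbot : Submodule.map (cf M a ha i.1 i.2) (Submodule.span K {x}) = ⊥ := by
        apply Submodule.eq_bot_iff _ |>.mpr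
        intro v hv
        obtain ⟨z, hz, hzv⟩ := hv
        rw [← hzv, cf_lt M a ha i.1 i.2 (by omega)]
        rfl
      have hWtop : Submodule.comap (cf M i.1 i.2 (c-1) hb) Wb = ⊤ := by
        rw [Submodule.eq_top_iff']
        intro v
        show cf M i.1 i.2 (c-1) hb v ∈ Wb
        rw [hmin i.1 (by omega) i.2 v, map_zero]
        exact Wb.zero_mem
      rw [hSbot, hWtop]
      exact isCompl_bot_top
  -- assemble
  have iso1 := iso_dsum_compl M _ _ hS hW hcompl
  have iso2 := restrict_S_iso_interval M a (c-1) ha hb hab x hxb hvan hS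
  have iso3 := dsum_congr_left (P := M.restrict
    (fun i : Fin n => Submodule.comap (cf M i.1 i.2 (c-1) hb) Wb) hW) iso2
  refine ⟨a+1, (c-1)+1, M.restrict
    (fun i : Fin n => Submodule.comap (cf M i.1 i.2 (c-1) hb) Wb) hW,
    ?_, by omega, by omega, by omega, ?_, iso1.trans iso3⟩
  · intro i
    show FiniteDimensional K ↥(Submodule.comap (cf M i.1 i.2 (c-1) hb) Wb)
    infer_instance
  · apply Finset.sum_lt_sum
    · intro i _
      exact Submodule.finrank_le _
    · refine ⟨⟨a, ha⟩, Finset.mem_univ _, ?_⟩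
      apply Submodule.finrank_lt
      intro htop
      apply hxbW
      have htop' : Submodule.comap (cf M a ha (c-1) hb) Wb = ⊤ := htop
      have hxmem : x ∈ Submodule.comap (cf M a ha (c-1) hb) Wb := by
        rw [htop']; trivial
      exact hxmem
/-- Being an iterated direct sum of interval representations. -/
inductive IsIntervalSum : LinRep K n → Prop where
  | zero {M : LinRep K n} : M.IsZero → IsIntervalSum M
  | cons {M : LinRep K n} (A B : ℕ) (P : LinRep K n) :
      1 ≤ A → A ≤ B → B ≤ n → LinRepIso M ((interval K n A B).dsum P) →
      IsIntervalSum P → IsIntervalSum M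

lemma decAll : ∀ (N : ℕ) (M : LinRep K n), (∀ i, FiniteDimensional K (M.V i)) →
    (∑ i, Module.finrank K (M.V i)) ≤ N → IsIntervalSum M := by
  intro N
  induction N with
  | zero =>
    intro M hfd hsum
    apply IsIntervalSum.zero
    intro i v
    have h0 : Module.finrank K (M.V i) = 0 :=
      Finset.sum_eq_zero_iff.mp (Nat.le_zero.mp hsum) i (Finset.mem_univ i)
    have hsub : Subsingleton (M.V i) := Module.finrank_zero_iff.mp h0
    exact Subsingleton.elim v 0
  | succ N IH =>
    intro M hfd hsum
    by_cases hz : M.IsZero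
    · exact IsIntervalSum.zero hz
    · obtain ⟨A, B, P, hPfd, hA, hAB, hBn, hlt, hiso⟩ := peel M hfd hz
      exact IsIntervalSum.cons A B P hA hAB hBn hiso (IH P hPfd (by omega))
end Dev

/-- For the linearly oriented quiver `1 → 2 → ⋯ → n` of type `Aₙ`, every
indecomposable (finite-dimensional) representation over a field `K` is isomorphic to
an interval representation `[a,b]` for some `1 ≤ a ≤ b ≤ n`. -/
theorem stmt_3 (K : Type) [Field K] (n : ℕ) (M : LinRep K n)
    (hfd : ∀ i, FiniteDimensional K (M.V i)) (hM : M.Indec) :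
    ∃ a b : ℕ, 1 ≤ a ∧ a ≤ b ∧ b ≤ n ∧ LinRepIso M (interval K n a b) := by
  have hdec := decAll (∑ i, Module.finrank K (M.V i)) M hfd le_rfl
  cases hdec with
  | zero hz => exact absurd hz hM.1
  | cons A B P hA hAB hBn hiso hP =>
    rcases hM.2 (interval K n A B) P hiso with hIz | hPz
    · exact absurd hIz (interval_ne_zero A B hA hAB hBn)
    · exact ⟨A, B, hA, hAB, hBn, hiso.trans (iso_of_dsum_zero _ _ hPz)⟩
end
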